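/- Let Ω ⊂ ℝ^d (d ≥ 1) be a bounded domain, let p ∈ (0,1), let ε > 0 and 0 ≤ ε' ≤ ε, and let u, w ∈ L²(Ω). Then all integrals below are finite and ∫_Ω [ψ_ε(u(x)²) + ψ_ε'(u(x)²)·(w(x)² − u(x)²)] dx ≥ ∫_Ω ψ_{ε'}(w(x)²) dx. -/

import Mathlib

open MeasureTheory Filter Topology

/-- The smooth approximation `ψ_ε` of `t ↦ t^{p/2}`:
`ψ_ε(t) = (p/2)·t/ε^{2−p} + (1 − p/2)·ε^p` for `0 ≤ t < ε²` and `ψ_ε(t) = t^{p/2}` for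
`t ≥ ε²` (so `ψ_0(t) = t^{p/2}`). Exponents are real powers. -/
noncomputable def psi (p ε t : ℝ) : ℝ :=
  if t < ε ^ 2 then p / 2 * t / ε ^ (2 - p) + (1 - p / 2) * ε ^ p
  else t ^ (p / 2)

/-- The derivative `ψ_ε'(t) = (p/2)·min(ε^{p−2}, t^{(p−2)/2})` of `ψ_ε` (for `ε > 0`);
since `t^{(p−2)/2} ≥ ε^{p−2}` precisely for `0 ≤ t ≤ ε²`, the minimum is the first
entry on `[0, ε²)` and the second one on `[ε², ∞)`. -/
noncomputable def psiDeriv (p ε t : ℝ) : ℝ :=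
  if t < ε ^ 2 then p / 2 * ε ^ (p - 2) else p / 2 * t ^ ((p - 2) / 2)

lemma keyK {p t s : ℝ} (hp0 : 0 < p) (hp1 : p < 1) (ht : 0 < t) (hs : 0 ≤ s) :
    s ^ (p/2) ≤ p/2 * t ^ ((p-2)/2) * s + (1 - p/2) * t ^ (p/2) := by
  have h1 : (0:ℝ) ≤ p/2 := by linarith
  have h2 : (0:ℝ) ≤ 1 - p/2 := by linarith
  have htp : (0:ℝ) < t ^ ((p-2)/2) := Real.rpow_pos_of_pos ht _
  have hg := Real.geom_mean_le_arith_mean2_weighted h1 h2 (mul_nonneg htp.le hs)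
    (Real.rpow_pos_of_pos ht (p/2)).le (by ring)
  have e1 : (t ^ ((p-2)/2) * s) ^ (p/2) * (t ^ (p/2)) ^ (1 - p/2) = s ^ (p/2) := by
    rw [Real.mul_rpow htp.le hs, ← Real.rpow_mul ht.le, ← Real.rpow_mul ht.le,
      mul_comm (t ^ ((p-2)/2 * (p/2))) (s ^ (p/2)), mul_assoc, ← Real.rpow_add ht]
    have : (p-2)/2 * (p/2) + (p/2) * (1 - p/2) = 0 := by ring
    rw [this, Real.rpow_zero, mul_one]
  rw [e1] at hg
  nlinarith [hg]

lemma tangent_rpow {p t s : ℝ} (hp0 : 0 < p) (hp1 : p < 1) (ht : 0 < t) (hs : 0 ≤ s) :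
    s ^ (p/2) ≤ t ^ (p/2) + p/2 * t ^ ((p-2)/2) * (s - t) := by
  have hK := keyK hp0 hp1 ht hs
  have e : t ^ ((p-2)/2) * t = t ^ (p/2) := by
    have h : (p:ℝ)/2 = (p-2)/2 + 1 := by ring
    rw [h, Real.rpow_add_one ht.ne']
  nlinarith [hK, e]

lemma eps_id1 {p ε : ℝ} (hε : 0 < ε) : ((ε ^ 2 : ℝ)) ^ ((p-2)/2) = ε ^ (p-2) := by
  rw [← Real.rpow_natCast ε 2, ← Real.rpow_mul hε.le]
  congr 1; push_cast; ring

lemma eps_id2 {p ε : ℝ} (hε : 0 < ε) : ((ε ^ 2 : ℝ)) ^ (p/2) = ε ^ p := by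
  rw [← Real.rpow_natCast ε 2, ← Real.rpow_mul hε.le]
  congr 1; push_cast; ring

lemma eps_id3 {p ε : ℝ} (hε : 0 < ε) : ε ^ (p-2) * ε ^ 2 = ε ^ p := by
  rw [← Real.rpow_natCast ε 2, ← Real.rpow_add hε]
  congr 1; push_cast; ring

lemma div_form {p ε t : ℝ} (hε : 0 < ε) : p / 2 * t / ε ^ (2 - p) = p/2 * ε ^ (p-2) * t := by
  have h : (2 - p : ℝ) = -(p - 2) := by ring
  rw [h, Real.rpow_neg hε.le, division_def, inv_inv]
  ring

lemma psi_le_linear {p ε s : ℝ} (hp0 : 0 < p) (hp1 : p < 1) (hε : 0 < ε) (hs : 0 ≤ s) :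
    psi p ε s ≤ p/2 * ε ^ (p-2) * s + (1 - p/2) * ε ^ p := by
  unfold psi
  split_ifs with h
  · rw [div_form hε]
  · have hK := keyK hp0 hp1 (pow_pos hε 2) hs
    rwa [eps_id1 hε, eps_id2 hε] at hK

lemma psi_nonneg {p ε s : ℝ} (hp0 : 0 < p) (hp1 : p < 1) (hε0 : 0 ≤ ε) (hs : 0 ≤ s) :
    0 ≤ psi p ε s := by
  unfold psi
  split_ifs with h
  · have hne : ε ≠ 0 := by
      intro h0; rw [h0] at h; simp at h; linarith
    have hεpos : 0 < ε := hε0.lt_of_ne (Ne.symm hne)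
    have t1 : 0 ≤ p/2 * s / ε ^ (2-p) := by positivity
    have t2 : 0 ≤ (1 - p/2) * ε ^ p := mul_nonneg (by linarith) (Real.rpow_nonneg hε0 _)
    linarith
  · exact Real.rpow_nonneg hs _

lemma psiDeriv_nonneg {p ε s : ℝ} (hp0 : 0 < p) (hε0 : 0 ≤ ε) (hs : 0 ≤ s) :
    0 ≤ psiDeriv p ε s := by
  unfold psiDeriv
  split_ifs with h
  · exact mul_nonneg (by linarith) (Real.rpow_nonneg hε0 _)
  · exact mul_nonneg (by linarith) (Real.rpow_nonneg hs _)

lemma psiDeriv_le {p ε s : ℝ} (hp0 : 0 < p) (hp1 : p < 1) (hε : 0 < ε) :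
    psiDeriv p ε s ≤ p/2 * ε ^ (p-2) := by
  unfold psiDeriv
  split_ifs with h
  · exact le_refl _
  · push_neg at h
    have h2 : s ^ ((p-2)/2) ≤ (ε^2 : ℝ) ^ ((p-2)/2) :=
      Real.rpow_le_rpow_of_nonpos (pow_pos hε 2) h (by linarith)
    rw [eps_id1 hε] at h2
    nlinarith

lemma psi_tangent {p ε s t : ℝ} (hp0 : 0 < p) (hp1 : p < 1) (hε : 0 < ε)
    (hs : 0 ≤ s) (ht : 0 ≤ t) :
    psi p ε s ≤ psi p ε t + psiDeriv p ε t * (s - t) := by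
  unfold psi psiDeriv
  split_ifs with h1 h2 h2
  · rw [div_form hε, div_form hε]
    nlinarith []
  · -- s < ε², t ≥ ε²
    have ht' : (0:ℝ) < t := lt_of_lt_of_le (pow_pos hε 2) (not_lt.mp h2)
    have hA := tangent_rpow hp0 hp1 ht' (le_of_lt (pow_pos hε 2)) (s := ε^2)
    rw [eps_id2 hε] at hA
    have hslope : t ^ ((p-2)/2) ≤ ε ^ (p-2) := by
      have h2' : t ^ ((p-2)/2) ≤ (ε^2 : ℝ) ^ ((p-2)/2) :=
        Real.rpow_le_rpow_of_nonpos (pow_pos hε 2) (not_lt.mp h2) (by linarith)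
      rwa [eps_id1 hε] at h2'
    have hs2 : s ≤ ε^2 := h1.le
    have he3 : ε ^ (p-2) * ε ^ 2 = ε ^ p := eps_id3 hε
    rw [div_form hε]
    nlinarith [mul_nonneg (sub_nonneg.2 hslope) (sub_nonneg.2 hs2), hA, he3, hp0.le]
  · -- s ≥ ε², t < ε²
    have hK := keyK hp0 hp1 (pow_pos hε 2) hs
    rw [eps_id1 hε, eps_id2 hε] at hK
    rw [div_form hε]
    nlinarith [hK]
  · -- both ≥ ε²
    have ht' : (0:ℝ) < t := lt_of_lt_of_le (pow_pos hε 2) (not_lt.mp h2)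
    exact tangent_rpow hp0 hp1 ht' hs

lemma psi_mono_eps {p ε ε' s : ℝ} (hp0 : 0 < p) (hp1 : p < 1) (hε : 0 < ε)
    (hε'0 : 0 ≤ ε') (hε' : ε' ≤ ε) (hs : 0 ≤ s) :
    psi p ε' s ≤ psi p ε s := by
  unfold psi
  split_ifs with h1 h2 h2
  · -- s < ε'², s < ε²
    have hne : ε' ≠ 0 := by
      intro h0; rw [h0] at h1; simp at h1; linarith
    have hε'pos : 0 < ε' := hε'0.lt_of_ne (Ne.symm hne)
    rw [div_form hε, div_form hε'pos]
    have hK := keyK hp0 hp1 (pow_pos hε 2) (sq_nonneg ε')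
    rw [eps_id1 hε, eps_id2 hε, eps_id2 hε'pos] at hK
    have hslope : ε ^ (p-2) ≤ ε' ^ (p-2) :=
      Real.rpow_le_rpow_of_nonpos hε'pos hε' (by linarith)
    have he3 : ε' ^ (p-2) * ε' ^ 2 = ε' ^ p := eps_id3 hε'pos
    have hs2 : s ≤ ε'^2 := h1.le
    nlinarith [mul_nonneg (sub_nonneg.2 hslope) (sub_nonneg.2 hs2), hK, he3, hp0.le]
  · exfalso
    push_neg at h2
    nlinarith [pow_le_pow_left₀ hε'0 hε' 2]
  · have hK := keyK hp0 hp1 (pow_pos hε 2) hs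
    rw [eps_id1 hε, eps_id2 hε] at hK
    rw [div_form hε]
    nlinarith [hK]
  · exact le_refl _

lemma measurable_psi (p ε : ℝ) : Measurable (psi p ε) := by
  unfold psi
  exact Measurable.ite (measurableSet_lt measurable_id measurable_const)
    (by fun_prop) (by fun_prop)

lemma measurable_psiDeriv (p ε : ℝ) : Measurable (psiDeriv p ε) := by
  unfold psiDeriv
  exact Measurable.ite (measurableSet_lt measurable_id measurable_const)
    (by fun_prop) (by fun_prop)

/-- on a bounded domain `Ω ⊂ ℝ^d`, for `p ∈ (0,1)`, `ε > 0`, `0 ≤ ε' ≤ ε` and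
`u, w ∈ L²(Ω)`, all integrals are finite and
`∫_Ω [ψ_ε(u²) + ψ_ε'(u²)(w² − u²)] dx ≥ ∫_Ω ψ_{ε'}(w²) dx`. -/
theorem integral_psi_linearization_majorizes
    {d : ℕ} (hd : 1 ≤ d) (Ω : Set (EuclideanSpace ℝ (Fin d)))
    (hΩ_open : IsOpen Ω) (hΩ_conn : IsConnected Ω) (hΩ_bdd : Bornology.IsBounded Ω)
    (p ε ε' : ℝ) (hp0 : 0 < p) (hp1 : p < 1) (hε : 0 < ε) (hε'0 : 0 ≤ ε') (hε' : ε' ≤ ε)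
    (u w : Lp ℝ 2 (volume.restrict Ω)) :
    Integrable (fun x => psi p ε (u x ^ 2) + psiDeriv p ε (u x ^ 2) * (w x ^ 2 - u x ^ 2))
      (volume.restrict Ω) ∧
    Integrable (fun x => psi p ε' (w x ^ 2)) (volume.restrict Ω) ∧
    ∫ x, psi p ε' (w x ^ 2) ∂(volume.restrict Ω) ≤
      ∫ x, psi p ε (u x ^ 2) + psiDeriv p ε (u x ^ 2) * (w x ^ 2 - u x ^ 2)
        ∂(volume.restrict Ω) := by
  haveI : IsFiniteMeasure (volume.restrict Ω) := ⟨by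
    rw [Measure.restrict_apply_univ]; exact hΩ_bdd.measure_lt_top⟩
  set a : ℝ := p/2 * ε ^ (p-2) with ha_def
  set b : ℝ := (1 - p/2) * ε ^ p with hb_def
  have ha : 0 ≤ a := mul_nonneg (by linarith) (Real.rpow_nonneg hε.le _)
  have hb : 0 ≤ b := mul_nonneg (by linarith) (Real.rpow_nonneg hε.le _)
  have hu2 : Integrable (fun x => (u : _ → ℝ) x ^ 2) (volume.restrict Ω) := (Lp.memLp u).integrable_sq
  have hw2 : Integrable (fun x => (w : _ → ℝ) x ^ 2) (volume.restrict Ω) := (Lp.memLp w).integrable_sq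
  have hum : AEMeasurable (fun x => (u : _ → ℝ) x ^ 2) (volume.restrict Ω) :=
    ((Lp.aestronglyMeasurable u).aemeasurable).pow_const 2
  have hwm : AEMeasurable (fun x => (w : _ → ℝ) x ^ 2) (volume.restrict Ω) :=
    ((Lp.aestronglyMeasurable w).aemeasurable).pow_const 2
  -- Integrability of the first integrand
  have hint1 : Integrable
      (fun x => psi p ε (u x ^ 2) + psiDeriv p ε (u x ^ 2) * (w x ^ 2 - u x ^ 2)) (volume.restrict Ω) := by
    have hg : Integrable (fun x => (a * u x ^ 2 + b) + a * (w x ^ 2 + u x ^ 2)) (volume.restrict Ω) := by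
      exact (((hu2.const_mul a).add (integrable_const b)).add
        ((hw2.add hu2).const_mul a))
    refine hg.mono' ?_ ?_
    · exact (((measurable_psi p ε).comp_aemeasurable hum).add
        ((((measurable_psiDeriv p ε).comp_aemeasurable hum)).mul
          (hwm.sub hum))).aestronglyMeasurable
    · filter_upwards with x
      have h1 : 0 ≤ psi p ε (u x ^ 2) := psi_nonneg hp0 hp1 hε.le (sq_nonneg _)
      have h2 : psi p ε (u x ^ 2) ≤ a * u x ^ 2 + b := by
        have := psi_le_linear hp0 hp1 hε (sq_nonneg (u x))
        rw [ha_def, hb_def]; linarith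
      have h3 : 0 ≤ psiDeriv p ε (u x ^ 2) := psiDeriv_nonneg hp0 hε.le (sq_nonneg _)
      have h4 : psiDeriv p ε (u x ^ 2) ≤ a := by
        have := psiDeriv_le (s := u x ^ 2) hp0 hp1 hε
        rw [ha_def]; linarith
      have h5 : |w x ^ 2 - u x ^ 2| ≤ w x ^ 2 + u x ^ 2 := by
        rw [abs_sub_le_iff]
        constructor <;> nlinarith [sq_nonneg (u x), sq_nonneg (w x)]
      calc ‖psi p ε (u x ^ 2) + psiDeriv p ε (u x ^ 2) * (w x ^ 2 - u x ^ 2)‖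
          ≤ |psi p ε (u x ^ 2)| + |psiDeriv p ε (u x ^ 2)| * |w x ^ 2 - u x ^ 2| := by
            rw [Real.norm_eq_abs]
            exact (abs_add_le _ _).trans (by rw [abs_mul])
        _ ≤ (a * u x ^ 2 + b) + a * (w x ^ 2 + u x ^ 2) := by
            rw [abs_of_nonneg h1, abs_of_nonneg h3]
            have := mul_le_mul h4 h5 (abs_nonneg _) ha
            linarith
  -- Integrability of the second integrand
  have hint2 : Integrable (fun x => psi p ε' (w x ^ 2)) (volume.restrict Ω) := by
    have hg : Integrable (fun x => a * w x ^ 2 + b) (volume.restrict Ω) :=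
      (hw2.const_mul a).add (integrable_const b)
    refine hg.mono' ?_ ?_
    · exact ((measurable_psi p ε').comp_aemeasurable hwm).aestronglyMeasurable
    · filter_upwards with x
      have h1 : 0 ≤ psi p ε' (w x ^ 2) := psi_nonneg hp0 hp1 hε'0 (sq_nonneg _)
      have h2 : psi p ε' (w x ^ 2) ≤ psi p ε (w x ^ 2) :=
        psi_mono_eps hp0 hp1 hε hε'0 hε' (sq_nonneg _)
      have h3 : psi p ε (w x ^ 2) ≤ a * w x ^ 2 + b := by
        have := psi_le_linear hp0 hp1 hε (sq_nonneg (w x))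
        rw [ha_def, hb_def]; linarith
      rw [Real.norm_eq_abs, abs_of_nonneg h1]
      linarith
  refine ⟨hint1, hint2, ?_⟩
  refine integral_mono hint2 hint1 ?_
  intro x
  have h2 : psi p ε' (w x ^ 2) ≤ psi p ε (w x ^ 2) :=
    psi_mono_eps hp0 hp1 hε hε'0 hε' (sq_nonneg _)
  have h3 : psi p ε (w x ^ 2) ≤ psi p ε (u x ^ 2) + psiDeriv p ε (u x ^ 2) * (w x ^ 2 - u x ^ 2) :=
    psi_tangent hp0 hp1 hε (sq_nonneg _) (sq_nonneg _)
  exact h2.trans h3
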